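/- Let γ_τ = τ^{-1} Σ_{n=1}^τ δ_n on ℤ and let η be a Schwartz function on ℝ with \widecheck{η} its inverse Fourier transform, η_s(ξ) = η(8^s ξ). If 8^s ≤ τ, then for |y| ≤ 4τ one has |(γ_τ ∗ \widecheck{η_s})(y)| ≤ C τ^{-1}, and for 2^k τ < |y| ≤ 2^{k+1} τ with k ≥ 2 one has |(γ_τ ∗ \widecheck{η_s})(y)| ≤ C 2^{-2k} τ^{-1}, where C depends only on η. -/

import Mathlib

private lemma tail_sum (M : ℕ) (hM : 1 ≤ M) (T : Finset ℕ) (v : ℕ → ℤ)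
    (hv : ∀ z ∈ T, (M : ℤ) < v z) (hinj : ∀ a ∈ T, ∀ b ∈ T, v a = v b → a = b)
    (N : ℕ) (hN : ∀ z ∈ T, v z < (N : ℤ)) :
    ∑ z ∈ T, (((v z : ℝ)) ^ 2)⁻¹ ≤ 2 / M := by
  have hM0 : (0:ℝ) < M := by exact_mod_cast hM
  have key : ∑ z ∈ T, (((v z : ℝ)) ^ 2)⁻¹
      = ∑ j ∈ T.image (fun z => (v z).toNat), ((j : ℝ) ^ 2)⁻¹ := by
    rw [Finset.sum_image]
    · refine Finset.sum_congr rfl fun z hz => ?_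
      have h1 : (0:ℤ) ≤ v z := le_of_lt (lt_of_le_of_lt (by positivity) (hv z hz))
      have h2 : (((v z).toNat : ℤ) : ℝ) = ((v z : ℤ) : ℝ) := by
        rw [Int.toNat_of_nonneg h1]
      push_cast at h2 ⊢
      rw [h2]
    · intro a ha b hb h
      have := hv a ha; have := hv b hb
      exact hinj a ha b hb (by simp only at h; omega)
  rw [key]
  calc ∑ j ∈ T.image (fun z => (v z).toNat), ((j : ℝ) ^ 2)⁻¹
      ≤ ∑ j ∈ Finset.Ioo M N, ((j : ℝ) ^ 2)⁻¹ := by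
        apply Finset.sum_le_sum_of_subset_of_nonneg
        · intro j hj
          simp only [Finset.mem_image] at hj
          obtain ⟨z, hz, rfl⟩ := hj
          have h1 := hv z hz
          have h2 := hN z hz
          simp only [Finset.mem_Ioo]
          omega
        · intro j _ _; positivity
    _ ≤ 2 / (M + 1) := sum_Ioo_inv_sq_le M N
    _ ≤ 2 / M := by
        apply div_le_div_of_nonneg_left (by norm_num) hM0
        linarith

private lemma window_sum (τ M : ℕ) (hM : 1 ≤ M) (y : ℤ) :
    ∑ z ∈ Finset.Icc 1 τ, ((M : ℝ) / ((M : ℝ) ^ 2 + ((y : ℝ) - (z : ℝ)) ^ 2)) ≤ 7 := by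
  have hM0 : (0:ℝ) < M := by exact_mod_cast hM
  set S := Finset.Icc 1 τ with hS
  set f : ℕ → ℝ := fun z => (M : ℝ) / ((M : ℝ) ^ 2 + ((y : ℝ) - (z : ℝ)) ^ 2) with hf
  have hfpos : ∀ z : ℕ, 0 ≤ f z := fun z => by positivity
  have hsplit := Finset.sum_filter_add_sum_filter_not S (fun z => (y - (z:ℤ)) ^ 2 ≤ (M : ℤ) ^ 2) f
  set A := S.filter (fun (z : ℕ) => (y - (z:ℤ)) ^ 2 ≤ (M : ℤ) ^ 2) with hA
  set B := S.filter (fun (z : ℕ) => ¬ (y - (z:ℤ)) ^ 2 ≤ (M : ℤ) ^ 2) with hB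
  -- bound on A
  have hAcard : A.card ≤ 2 * M + 1 := by
    have hmem : ∀ z ∈ A, (z : ℤ) ∈ Finset.Icc (y - M) (y + M) := by
      intro z hz
      simp only [hA, Finset.mem_filter] at hz
      have h2 := hz.2
      have hM0' : (1:ℤ) ≤ (M:ℤ) := by exact_mod_cast hM
      simp only [Finset.mem_Icc]
      constructor <;> nlinarith [sq_nonneg (y - (z:ℤ) - M), sq_nonneg (y - (z:ℤ) + M)]
    have hcard := Finset.card_le_card_of_injOn (fun (z : ℕ) => (z : ℤ)) hmem
      (fun a _ b _ h => Nat.cast_injective h)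
    have hc : (Finset.Icc (y - M) (y + M)).card = 2 * M + 1 := by
      rw [Int.card_Icc]; omega
    omega
  have hAsum : ∑ z ∈ A, f z ≤ 3 := by
    have hterm : ∀ z ∈ A, f z ≤ (M : ℝ)⁻¹ := by
      intro z _
      have h1 : (M:ℝ)^2 ≤ (M:ℝ)^2 + ((y:ℝ) - z)^2 := by nlinarith [sq_nonneg ((y:ℝ) - z)]
      have h2 : f z ≤ (M:ℝ) / (M:ℝ)^2 :=
        div_le_div_of_nonneg_left (le_of_lt hM0) (by positivity) h1
      have h3 : (M:ℝ) / (M:ℝ)^2 = (M:ℝ)⁻¹ := by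
        rw [pow_two, div_mul_eq_div_div, div_self hM0.ne', one_div]
      linarith [h2, h3.le]
    calc ∑ z ∈ A, f z ≤ A.card • (M:ℝ)⁻¹ := Finset.sum_le_card_nsmul _ _ _ hterm
      _ = (A.card : ℝ) * (M:ℝ)⁻¹ := by rw [nsmul_eq_mul]
      _ ≤ ((2 * M + 1 : ℕ) : ℝ) * (M:ℝ)⁻¹ := by
          have hcc : (A.card : ℝ) ≤ ((2 * M + 1 : ℕ) : ℝ) := by exact_mod_cast hAcard
          exact mul_le_mul_of_nonneg_right hcc (by positivity)
      _ ≤ 3 := by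
          rw [inv_eq_one_div, mul_one_div, div_le_iff₀ hM0]
          push_cast
          have : (1:ℝ) ≤ M := by exact_mod_cast hM
          linarith
  -- bound on B
  have hBprop : ∀ z ∈ B, (M:ℤ)^2 < (y - (z:ℤ))^2 ∧ 1 ≤ z ∧ z ≤ τ := by
    intro z hz
    simp only [hB, hS, Finset.mem_filter, Finset.mem_Icc] at hz
    exact ⟨by omega, hz.1.1, hz.1.2⟩
  have habs2 : ∀ z : ℕ, ((y:ℝ) - z)^2 = (((y - (z:ℤ)) : ℤ) : ℝ)^2 := by
    intro z; push_cast; ring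
  have hfB : ∀ z ∈ B, f z ≤ (M:ℝ) * ((((y - (z:ℤ)) : ℤ) : ℝ)^2)⁻¹ := by
    intro z hz
    obtain ⟨h1, -, -⟩ := hBprop z hz
    have hu : (1:ℤ) ≤ (y - (z:ℤ))^2 := by nlinarith [hM]
    have hu' : (1:ℝ) ≤ (((y - (z:ℤ)) : ℤ) : ℝ)^2 := by exact_mod_cast hu
    have h2 : (((y - (z:ℤ)) : ℤ) : ℝ)^2 ≤ (M:ℝ)^2 + ((y:ℝ) - z)^2 := by
      rw [habs2 z]; nlinarith [sq_nonneg (M:ℝ)]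
    calc f z = (M:ℝ) / ((M:ℝ)^2 + ((y:ℝ) - z)^2) := rfl
      _ ≤ (M:ℝ) / (((y - (z:ℤ)) : ℤ) : ℝ)^2 :=
          div_le_div_of_nonneg_left (le_of_lt hM0) (by linarith) h2
      _ = (M:ℝ) * ((((y - (z:ℤ)) : ℤ) : ℝ)^2)⁻¹ := div_eq_mul_inv _ _
  have hBsum : ∑ z ∈ B, f z ≤ 4 := by
    have hsplit2 := Finset.sum_filter_add_sum_filter_not B (fun z => (z:ℤ) < y) f
    set B₁ := B.filter (fun (z : ℕ) => (z:ℤ) < y) with hB1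
    set B₂ := B.filter (fun (z : ℕ) => ¬ (z:ℤ) < y) with hB2
    have h1 : ∑ z ∈ B₁, f z ≤ 2 := by
      have htail := tail_sum M hM B₁ (fun z => y - z) ?_ ?_ y.toNat ?_
      · calc ∑ z ∈ B₁, f z ≤ ∑ z ∈ B₁, (M:ℝ) * ((((y - (z:ℤ)) : ℤ) : ℝ)^2)⁻¹ := by
              refine Finset.sum_le_sum fun z hz => hfB z ?_
              simp only [hB1, Finset.mem_filter] at hz; exact hz.1
          _ = (M:ℝ) * ∑ z ∈ B₁, ((((y - (z:ℤ)) : ℤ) : ℝ)^2)⁻¹ := by rw [Finset.mul_sum]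
          _ ≤ (M:ℝ) * (2 / M) := by gcongr
          _ = 2 := by field_simp
      · intro z hz
        simp only [hB1, Finset.mem_filter] at hz
        obtain ⟨h1, -, -⟩ := hBprop z hz.1
        have hzy := hz.2
        by_contra hcon
        push_neg at hcon
        have hd : (0:ℤ) ≤ y - z := by omega
        nlinarith [mul_le_mul hcon hcon hd (by positivity : (0:ℤ) ≤ (M:ℤ))]
      · intro a ha b hb h
        have h' : y - (a:ℤ) = y - (b:ℤ) := h
        omega
      · intro z hz
        simp only [hB1, Finset.mem_filter] at hz
        obtain ⟨-, hz1, -⟩ := hBprop z hz.1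
        have hzy := hz.2
        show y - (z:ℤ) < (y.toNat : ℤ)
        omega
    have h2 : ∑ z ∈ B₂, f z ≤ 2 := by
      have htail := tail_sum M hM B₂ (fun z => (z:ℤ) - y) ?_ ?_ (((τ:ℤ) - y).toNat + 1) ?_
      · calc ∑ z ∈ B₂, f z ≤ ∑ z ∈ B₂, (M:ℝ) * ((((y - (z:ℤ)) : ℤ) : ℝ)^2)⁻¹ := by
              refine Finset.sum_le_sum fun z hz => hfB z ?_
              simp only [hB2, Finset.mem_filter] at hz; exact hz.1
          _ = ∑ z ∈ B₂, (M:ℝ) * (((((z:ℤ) - y) : ℤ) : ℝ)^2)⁻¹ := by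
              refine Finset.sum_congr rfl fun z hz => ?_
              congr 1
              push_cast
              ring_nf
          _ = (M:ℝ) * ∑ z ∈ B₂, (((((z:ℤ) - y) : ℤ) : ℝ)^2)⁻¹ := by rw [Finset.mul_sum]
          _ ≤ (M:ℝ) * (2 / M) := by gcongr
          _ = 2 := by field_simp
      · intro z hz
        simp only [hB2, Finset.mem_filter] at hz
        obtain ⟨h1, -, -⟩ := hBprop z hz.1
        have hzy := hz.2
        by_contra hcon
        push_neg at hcon
        have hd : (0:ℤ) ≤ (z:ℤ) - y := by omega
        nlinarith [mul_le_mul hcon hcon hd (by positivity : (0:ℤ) ≤ (M:ℤ))]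
      · intro a ha b hb h
        have h' : (a:ℤ) - y = (b:ℤ) - y := h
        omega
      · intro z hz
        simp only [hB2, Finset.mem_filter] at hz
        obtain ⟨-, -, hz2⟩ := hBprop z hz.1
        have hzy := hz.2
        show (z:ℤ) - y < (((((τ:ℤ) - y).toNat + 1 : ℕ)) : ℤ)
        push_cast
        omega
    linarith
  linarith

/-- Kernel estimates for γ_τ ∗ η_s^∨ on ℤ, where η_s^∨(y) = 8^{-s} η^∨(y/8^s)
and η^∨ satisfies the decay |η^∨(t)| ≤ C₀(1+t²)⁻¹.  If 8^s ≤ τ then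
|(γ_τ ∗ η_s^∨)(y)| ≤ C/τ for |y| ≤ 4τ, and ≤ C 2^{-2k}/τ for
2^k τ < |y| ≤ 2^{k+1} τ, k ≥ 2, with C depending only on η. -/
theorem kernel_decay (ηinv : ℝ → ℝ) (C₀ : ℝ) (hC₀ : 0 < C₀)
    (hdecay : ∀ t : ℝ, |ηinv t| ≤ C₀ / (1 + t ^ 2)) :
    ∃ C : ℝ, 0 < C ∧ ∀ τ s : ℕ, 0 < τ → 8 ^ s ≤ τ →
      (∀ y : ℤ, |y| ≤ 4 * (τ : ℤ) →
        |(τ : ℝ)⁻¹ * ∑ z ∈ Finset.Icc 1 τ,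
            ((8 : ℝ) ^ s)⁻¹ * ηinv (((y : ℝ) - (z : ℝ)) / (8 : ℝ) ^ s)| ≤
          C / τ) ∧
      (∀ k : ℕ, 2 ≤ k → ∀ y : ℤ,
        2 ^ k * (τ : ℤ) < |y| → |y| ≤ 2 ^ (k + 1) * (τ : ℤ) →
        |(τ : ℝ)⁻¹ * ∑ z ∈ Finset.Icc 1 τ,
            ((8 : ℝ) ^ s)⁻¹ * ηinv (((y : ℝ) - (z : ℝ)) / (8 : ℝ) ^ s)| ≤
          C * ((2 : ℝ) ^ (2 * k))⁻¹ / τ) := by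
  refine ⟨7 * C₀, by positivity, fun τ s hτ hsτ => ?_⟩
  have hτ0 : (0:ℝ) < τ := by exact_mod_cast hτ
  set m : ℝ := (8:ℝ) ^ s with hmdef
  have hm0 : 0 < m := by positivity
  have hm1 : (1:ℝ) ≤ m := by
    rw [hmdef]
    calc (1:ℝ) = 1 ^ s := (one_pow s).symm
      _ ≤ 8 ^ s := pow_le_pow_left₀ (by norm_num) (by norm_num) s
  have hmτ : m ≤ τ := by
    rw [hmdef]
    calc ((8:ℝ))^s = ((8^s : ℕ) : ℝ) := by push_cast; ring
      _ ≤ (τ : ℝ) := by exact_mod_cast hsτ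
  -- term bound
  have hterm : ∀ u : ℝ, ((8:ℝ)^s)⁻¹ * |ηinv (u / (8:ℝ)^s)| ≤ C₀ * m / (m^2 + u^2) := by
    intro u
    have h := hdecay (u / m)
    have heq : m⁻¹ * (C₀ / (1 + (u / m) ^ 2)) = C₀ * m / (m ^ 2 + u ^ 2) := by
      have h2 : m^2 + u^2 > 0 := by positivity
      field_simp
    calc m⁻¹ * |ηinv (u / m)| ≤ m⁻¹ * (C₀ / (1 + (u / m) ^ 2)) := by
          apply mul_le_mul_of_nonneg_left h (by positivity)
      _ = C₀ * m / (m ^ 2 + u ^ 2) := heq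
  -- common abs bound
  have hcommon : ∀ y : ℤ,
      |(τ : ℝ)⁻¹ * ∑ z ∈ Finset.Icc 1 τ,
          ((8 : ℝ) ^ s)⁻¹ * ηinv (((y : ℝ) - (z : ℝ)) / (8 : ℝ) ^ s)|
        ≤ (τ : ℝ)⁻¹ * ∑ z ∈ Finset.Icc 1 τ, C₀ * m / (m^2 + ((y:ℝ) - z)^2) := by
    intro y
    rw [abs_mul, abs_inv, Nat.abs_cast]
    apply mul_le_mul_of_nonneg_left _ (by positivity)
    refine (Finset.abs_sum_le_sum_abs _ _).trans (Finset.sum_le_sum fun z _ => ?_)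
    rw [abs_mul, abs_inv, abs_of_pos hm0]
    exact hterm _
  constructor
  · -- part 1
    intro y _
    refine (hcommon y).trans ?_
    have hws := window_sum τ (8^s) (Nat.one_le_iff_ne_zero.mpr (pow_ne_zero s (by norm_num))) y
    have hcast : ((8^s : ℕ) : ℝ) = m := by rw [hmdef]; push_cast; ring
    rw [hcast] at hws
    have hsum : ∑ z ∈ Finset.Icc 1 τ, C₀ * m / (m^2 + ((y:ℝ) - z)^2) ≤ 7 * C₀ := by
      calc ∑ z ∈ Finset.Icc 1 τ, C₀ * m / (m^2 + ((y:ℝ) - z)^2)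
          = C₀ * ∑ z ∈ Finset.Icc 1 τ, m / (m^2 + ((y:ℝ) - z)^2) := by
            rw [Finset.mul_sum]; refine Finset.sum_congr rfl fun z _ => ?_; ring
        _ ≤ C₀ * 7 := by
            apply mul_le_mul_of_nonneg_left hws (le_of_lt hC₀)
        _ = 7 * C₀ := by ring
    rw [div_eq_mul_inv, mul_comm (7 * C₀)]
    exact mul_le_mul_of_nonneg_left hsum (by positivity)
  · -- part 2
    intro k hk y hy1 _
    refine (hcommon y).trans ?_
    set a : ℝ := (2:ℝ)^k with hadef
    have ha4 : (4:ℝ) ≤ a := by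
      rw [hadef]
      calc (4:ℝ) = 2^2 := by norm_num
        _ ≤ 2^k := by apply pow_le_pow_right₀ (by norm_num) hk
    have hy1' : a * τ < |(y:ℝ)| := by
      have h1 : ((2^k * τ : ℤ) : ℝ) < ((|y| : ℤ) : ℝ) := by exact_mod_cast hy1
      push_cast at h1
      rw [hadef]
      linarith
    have hd : (0:ℝ) < a * τ - τ := by nlinarith
    have hterm2 : ∀ z ∈ Finset.Icc 1 τ, C₀ * m / (m^2 + ((y:ℝ) - z)^2)
        ≤ C₀ * m / (a * τ - τ)^2 := by
      intro z hz
      simp only [Finset.mem_Icc] at hz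
      have hz1 : (1:ℝ) ≤ z := by exact_mod_cast hz.1
      have hz2 : (z:ℝ) ≤ τ := by exact_mod_cast hz.2
      have habs : a * τ - τ ≤ |(y:ℝ) - z| := by
        have h1 : |(y:ℝ)| - |(z:ℝ)| ≤ |(y:ℝ) - z| := abs_sub_abs_le_abs_sub _ _
        have h2 : |(z:ℝ)| = z := abs_of_nonneg (by linarith)
        linarith [hy1'.le, h1, h2.le, h2.ge]
      have hsq : (a * τ - τ)^2 ≤ ((y:ℝ) - z)^2 := by
        calc (a * τ - τ)^2 ≤ |(y:ℝ) - z|^2 := by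
              apply pow_le_pow_left₀ (le_of_lt hd) habs
          _ = ((y:ℝ) - z)^2 := sq_abs _
      apply div_le_div_of_nonneg_left (by positivity) (by positivity)
      nlinarith [sq_nonneg m]
    have hsum : ∑ z ∈ Finset.Icc 1 τ, C₀ * m / (m^2 + ((y:ℝ) - z)^2)
        ≤ τ * (C₀ * m / (a * τ - τ)^2) := by
      calc ∑ z ∈ Finset.Icc 1 τ, C₀ * m / (m^2 + ((y:ℝ) - z)^2)
          ≤ (Finset.Icc 1 τ).card • (C₀ * m / (a * τ - τ)^2) :=
            Finset.sum_le_card_nsmul _ _ _ hterm2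
        _ = ((Finset.Icc 1 τ).card : ℝ) * (C₀ * m / (a * τ - τ)^2) := by rw [nsmul_eq_mul]
        _ ≤ τ * (C₀ * m / (a * τ - τ)^2) := by
            have hc : (Finset.Icc 1 τ).card = τ := by rw [Nat.card_Icc]; omega
            rw [hc]
    have hpow : (2:ℝ)^(2*k) = a^2 := by
      rw [hadef, two_mul, pow_add]
      ring
    rw [hpow]
    have hfinal : (τ:ℝ)⁻¹ * (τ * (C₀ * m / (a * τ - τ)^2)) ≤ 7 * C₀ * (a^2)⁻¹ / τ := by
      rw [inv_mul_cancel_left₀ (ne_of_gt hτ0)]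
      have hr : 7 * C₀ * (a^2)⁻¹ / (τ:ℝ) = 7 * C₀ / (a^2 * τ) := by
        field_simp
      rw [hr, div_le_div_iff₀ (by positivity) (by positivity)]
      have hkey : a^2 ≤ 7 * (a - 1)^2 := by nlinarith
      have h1 : m * a^2 ≤ (τ:ℝ) * (7 * (a-1)^2) :=
        mul_le_mul hmτ hkey (by positivity) hτ0.le
      nlinarith [mul_le_mul_of_nonneg_right (mul_le_mul_of_nonneg_left h1 hC₀.le) hτ0.le]
    calc (τ:ℝ)⁻¹ * ∑ z ∈ Finset.Icc 1 τ, C₀ * m / (m^2 + ((y:ℝ) - z)^2)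
        ≤ (τ:ℝ)⁻¹ * (τ * (C₀ * m / (a * τ - τ)^2)) := by
          apply mul_le_mul_of_nonneg_left hsum (by positivity)
      _ ≤ 7 * C₀ * (a^2)⁻¹ / τ := hfinal
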